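/- Define F : ℂ² → ℝ³ by F(z,w) = (1/4)(|z|² − |w|², 2·Re(w·conj z), 2·Im(w·conj z)). Let A be a 2×n complex matrix such that A·A* is a real scalar multiple of the 2×2 identity matrix, and let C₁,…,Cₙ ∈ ℂ² be the columns of A. Then ∑_{i=1}^{n} F(Cᵢ) = 0; that is, the vectors F(C₁),…,F(Cₙ) are the edges of a closed n-gon in ℝ³. -/

import Mathlib

/-- The (scaled) Hopf map `F : ℂ² → ℝ³` on column vectors,
`F(z,w) = (1/4)(|z|² − |w|², 2·Re(w·conj z), 2·Im(w·conj z))`. -/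
noncomputable def hopfF (v : Fin 2 → ℂ) : Fin 3 → ℝ :=
  ![(‖v 0‖ ^ 2 - ‖v 1‖ ^ 2) / 4,
    2 * (v 1 * (starRingEnd ℂ) (v 0)).re / 4,
    2 * (v 1 * (starRingEnd ℂ) (v 0)).im / 4]

/-- If `A·A*` is a real scalar multiple of the identity, then the images under `F` of the
columns of `A` are the edges of a closed `n`-gon in `ℝ³`: they sum to zero. -/
theorem hopfF_columns_close_up (n : ℕ) (A : Matrix (Fin 2) (Fin n) ℂ)
    (h : ∃ r : ℝ, A * A.conjTranspose = (r : ℂ) • 1) :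
    ∑ i : Fin n, hopfF (fun j => A j i) = 0 := by
  obtain ⟨r, hr⟩ := h
  have key : ∀ j k : Fin 2, ∑ i : Fin n, A j i * (starRingEnd ℂ) (A k i)
      = ((r : ℂ) • (1 : Matrix (Fin 2) (Fin 2) ℂ)) j k := by
    intro j k
    rw [← hr, Matrix.mul_apply]
    simp [Matrix.conjTranspose_apply]
  have h00 := key 0 0
  have h11 := key 1 1
  have h10 := key 1 0
  simp [Matrix.one_apply] at h00 h11 h10
  have hn0 : ∑ i : Fin n, Complex.normSq (A 0 i) = r := by
    have := congrArg Complex.re h00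
    simpa [Complex.mul_conj] using this
  have hn1 : ∑ i : Fin n, Complex.normSq (A 1 i) = r := by
    have := congrArg Complex.re h11
    simpa [Complex.mul_conj] using this
  have hre : ∑ i : Fin n, (A 1 i * (starRingEnd ℂ) (A 0 i)).re = 0 := by
    have := congrArg Complex.re h10
    simpa using this
  have him : ∑ i : Fin n, (A 1 i * (starRingEnd ℂ) (A 0 i)).im = 0 := by
    have := congrArg Complex.im h10
    simpa using this
  funext j
  fin_cases j <;> simp [hopfF, Complex.sq_norm]
  · rw [Finset.sum_congr rfl (fun (i : Fin n) _ => sub_div (Complex.normSq (A 0 i)) (Complex.normSq (A 1 i)) 4), Finset.sum_sub_distrib, ← Finset.sum_div, ← Finset.sum_div, hn0, hn1, sub_self]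
  · have h2 := hre
    simp only [Complex.mul_re, Complex.conj_re, Complex.conj_im] at h2
    have h3 : (∑ x : Fin n, ((A 1 x).re * (A 0 x).re - (A 1 x).im * -(A 0 x).im)) * (1/2) = 0 := by
      rw [h2, zero_mul]
    rw [← h3, Finset.sum_mul]
    exact Finset.sum_congr rfl fun i _ => by ring
  · have h2 := him
    simp only [Complex.mul_im, Complex.conj_re, Complex.conj_im] at h2
    have h3 : (∑ x : Fin n, ((A 1 x).re * -(A 0 x).im + (A 1 x).im * (A 0 x).re)) * (1/2) = 0 := by
      rw [h2, zero_mul]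
    rw [← h3, Finset.sum_mul]
    exact Finset.sum_congr rfl fun i _ => by ring
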